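/- arXiv:1003.3989 — 4 statements merged into one kernel-verified Lean document; each statement's English description precedes it below -/
import Mathlib

section
/- Let n ≥ 1 and N ≥ 1 be integers and let λ be a real number such that λ − n/2 + k ≠ 0 for every integer k with 1 ≤ k ≤ N. For 0 ≤ j ≤ N set a_j(λ) = (−1)^j · C(n, N−j) · (n/2)_j (λ)_j / ((λ − n/2 + 1)_j · j!). Then λ·N·∑_{j=0}^{N} a_j(λ) + (λ − n + 2N)·∑_{j=0}^{N} j·a_j(λ) = 0. (This is the master relation, Theorem 2.2, verified on the round sphere S^n: up to a common factor (−1)^N 2^{−2N}, the numbers a_j(λ) equal T*_{2j}(λ)(v_{2N−2j}) for the Poincaré metric on the unit ball.) -/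
set_option maxHeartbeats 1000000


/-- Pochhammer symbol `(x)_k = x (x+1) ⋯ (x+k-1)`, with `(x)_0 = 1`. -/
noncomputable def poch (x : ℝ) : ℕ → ℝ
  | 0 => 1
  | k + 1 => poch x k * (x + k)

/-- Cast of the downward choose recurrence, valid in ℝ with no truncation. -/
lemma choose_step (n N j : ℕ) (hj : j < N) :
    ((j : ℝ) + 1 + n - N) * (n.choose (N - (j + 1)) : ℝ)
      = ((N : ℝ) - j) * (n.choose (N - j) : ℝ) := by
  have hm : N - j = (N - (j + 1)) + 1 := by omega
  by_cases h : N - (j + 1) ≤ n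
  · have key := Nat.choose_succ_right_eq n (N - (j + 1))
    rw [← hm] at key
    have : ((n.choose (N - j) : ℝ)) * ((N : ℝ) - j)
        = (n.choose (N - (j + 1)) : ℝ) * ((n : ℝ) - (N - (j + 1) : ℕ)) := by
      have h2 : (N - j : ℕ) ≤ N := Nat.sub_le _ _
      calc ((n.choose (N - j) : ℝ)) * ((N : ℝ) - j)
          = ((n.choose (N - j) * (N - j) : ℕ) : ℝ) := by
            push_cast [Nat.cast_sub (le_of_lt hj)]; ring
        _ = ((n.choose (N - (j + 1)) * (n - (N - (j + 1))) : ℕ) : ℝ) := by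
            rw [← key]
        _ = (n.choose (N - (j + 1)) : ℝ) * ((n : ℝ) - (N - (j + 1) : ℕ)) := by
            push_cast [Nat.cast_sub h]; ring
    have hcast : ((N - (j + 1) : ℕ) : ℝ) = (N : ℝ) - (j + 1) := by
      push_cast [Nat.cast_sub hj]; ring
    rw [hcast] at this
    linarith [this]
  · have h1 : n.choose (N - (j + 1)) = 0 := Nat.choose_eq_zero_of_lt (by omega)
    have h2 : n.choose (N - j) = 0 := Nat.choose_eq_zero_of_lt (by omega)
    rw [h1, h2]; push_cast; ring

theorem statement2 (n N : ℕ) (hn : 1 ≤ n) (hN : 1 ≤ N) (lam : ℝ)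
    (hlam : ∀ k : ℕ, 1 ≤ k → k ≤ N → lam - (n : ℝ) / 2 + k ≠ 0)
    (a : ℕ → ℝ)
    (ha : ∀ j, j ≤ N →
      a j = (-1) ^ j * (n.choose (N - j) : ℝ) * poch ((n : ℝ) / 2) j * poch lam j /
        (poch (lam - (n : ℝ) / 2 + 1) j * (j.factorial : ℝ))) :
    lam * N * ∑ j ∈ Finset.range (N + 1), a j +
      (lam - n + 2 * N) * ∑ j ∈ Finset.range (N + 1), (j : ℝ) * a j = 0 := by
  have hn0 : (n : ℝ) ≠ 0 := by positivity
  -- the telescoping auxiliary sequence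
  set F : ℕ → ℝ := fun j =>
    -(2 / (n : ℝ)) * j * ((j : ℝ) + n - N) * (lam - n / 2 + j) * a j with hF
  -- nonvanishing of the Pochhammer denominator
  have hR : ∀ k, k ≤ N → poch (lam - (n : ℝ) / 2 + 1) k ≠ 0 := by
    intro k hk
    induction k with
    | zero => simp [poch]
    | succ i ih =>
      have hi : i ≤ N := by omega
      have h1 : lam - (n : ℝ) / 2 + 1 + i ≠ 0 := by
        have := hlam (i + 1) (by omega) hk
        push_cast at this ⊢
        intro h; apply this; linarith
      simpa [poch] using mul_ne_zero (ih hi) h1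
  have key : ∀ j, j < N →
      lam * N * a j + (lam - n + 2 * N) * ((j : ℝ) * a j) = F (j + 1) - F j := by
    intro j hj
    have hj1 : j + 1 ≤ N := hj
    have hu : lam - (n : ℝ) / 2 + 1 + (j : ℝ) ≠ 0 := by
      have h0 := hlam (j + 1) (by omega) hj1
      push_cast at h0
      intro h; exact h0 (by linarith)
    have hRj := hR j (le_of_lt hj)
    have hf : (j.factorial : ℝ) ≠ 0 := by positivity
    have hc := choose_step n N j hj
    have hpoch : ∀ x : ℝ, poch x (j + 1) = poch x j * (x + j) := fun x => rfl
    -- abbreviations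
    set c0 : ℝ := (n.choose (N - j) : ℝ) with hc0
    set c1 : ℝ := (n.choose (N - (j + 1)) : ℝ) with hc1
    set P : ℝ := poch ((n : ℝ) / 2) j with hP
    set Q : ℝ := poch lam j with hQ
    set R : ℝ := poch (lam - (n : ℝ) / 2 + 1) j with hRdef
    have haj : a j = (-1) ^ j * c0 * P * Q / (R * (j.factorial : ℝ)) := ha j (le_of_lt hj)
    have haj1 : a (j + 1) = (-1) ^ (j + 1) * c1 * (P * ((n : ℝ) / 2 + j)) * (Q * (lam + j)) /
        ((R * (lam - (n : ℝ) / 2 + 1 + j)) * ((j.factorial : ℝ) * ((j : ℝ) + 1))) := by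
      rw [ha (j + 1) hj1, hpoch, hpoch, hpoch]
      push_cast [Nat.factorial_succ]
      ring
    have hj1' : ((j : ℝ) + 1) ≠ 0 := by positivity
    -- closed form for F (j+1)
    have hFj1 : F (j + 1) = (2 / (n : ℝ)) * ((j : ℝ) + 1 + n - N) * c1 *
        ((n : ℝ) / 2 + j) * (lam + j) * ((-1) ^ j * P * Q / (R * (j.factorial : ℝ))) := by
      show -(2 / (n : ℝ)) * ((j + 1 : ℕ) : ℝ) * (((j + 1 : ℕ) : ℝ) + n - N) *
          (lam - n / 2 + ((j + 1 : ℕ) : ℝ)) * a (j + 1) = _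
      rw [haj1]
      push_cast
      have e : lam - (n : ℝ) / 2 + ((j : ℝ) + 1) = lam - (n : ℝ) / 2 + 1 + (j : ℝ) := by ring
      rw [e]
      set u := lam - (n : ℝ) / 2 + 1 + (j : ℝ) with hudef
      field_simp
      ring
    -- use the choose recurrence
    have hFj1' : F (j + 1) = (2 / (n : ℝ)) * (((N : ℝ) - j) * c0) *
        ((n : ℝ) / 2 + j) * (lam + j) * ((-1) ^ j * P * Q / (R * (j.factorial : ℝ))) := by
      rw [hFj1]
      linear_combination ((2 / (n : ℝ)) * ((n : ℝ) / 2 + j) * (lam + j) *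
        ((-1) ^ j * P * Q / (R * (j.factorial : ℝ)))) * hc
    rw [hFj1']
    show _ = _ - (-(2 / (n : ℝ)) * (j : ℝ) * ((j : ℝ) + n - N) * (lam - n / 2 + j) * a j)
    rw [haj]
    field_simp
    ring
  -- last term
  have hlast : lam * N * a N + (lam - n + 2 * N) * ((N : ℝ) * a N) = -F N := by
    show _ = -(-(2 / (n : ℝ)) * (N : ℝ) * ((N : ℝ) + n - N) * (lam - n / 2 + N) * a N)
    field_simp
    ring
  have hF0 : F 0 = 0 := by rw [hF]; simp
  have hsum : lam * N * ∑ j ∈ Finset.range (N + 1), a j +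
      (lam - n + 2 * N) * ∑ j ∈ Finset.range (N + 1), (j : ℝ) * a j
      = ∑ j ∈ Finset.range (N + 1),
          (lam * N * a j + (lam - n + 2 * N) * ((j : ℝ) * a j)) := by
    rw [Finset.mul_sum, Finset.mul_sum, ← Finset.sum_add_distrib]
  rw [hsum, Finset.sum_range_succ]
  have htel : ∑ j ∈ Finset.range N,
      (lam * N * a j + (lam - n + 2 * N) * ((j : ℝ) * a j)) = F N - F 0 := by
    rw [← Finset.sum_range_sub F N]
    exact Finset.sum_congr rfl fun j hj => key j (Finset.mem_range.mp hj)
  rw [htel, hlast, hF0]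
  ring
end

section
/- Let n ≥ 1 and N ≥ 1 be integers and let λ be a real number such that λ − n/2 + k ≠ 0 for every integer k with 1 ≤ k ≤ N. For 0 ≤ j ≤ N set a_j(λ) = (−1)^j · C(n, N−j) · (n/2)_j (λ)_j / ((λ − n/2 + 1)_j · j!). Then (λ − n + 2N)·∑_{j=0}^{N} (2N + 2j)·a_j(λ) = −2N·(n − 2N)·∑_{j=0}^{N} a_j(λ). (This is the second form (2.5) of the master relation, verified on the round sphere S^n.) -/
lemma poch_succ (x : ℝ) (k : ℕ) : poch x (k+1) = poch x k * (x + k) := rfl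

lemma choose_real (n k : ℕ) :
    ((n:ℝ) - k) * n.choose k = ((k:ℝ) + 1) * n.choose (k+1) := by
  rcases le_or_gt k n with h | h
  · have h1 : (n.choose (k+1) * (k+1) : ℕ) = n.choose k * (n - k) :=
      Nat.choose_succ_right_eq n k
    have h2 := congrArg (Nat.cast (R := ℝ)) h1
    push_cast [Nat.cast_sub h] at h2
    linarith
  · rw [Nat.choose_eq_zero_of_lt h, Nat.choose_eq_zero_of_lt (by omega)]
    simp

theorem statement3 (n N : ℕ) (hn : 1 ≤ n) (hN : 1 ≤ N) (lam : ℝ)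
    (hlam : ∀ k : ℕ, 1 ≤ k → k ≤ N → lam - (n : ℝ) / 2 + k ≠ 0)
    (a : ℕ → ℝ)
    (ha : ∀ j, j ≤ N →
      a j = (-1) ^ j * (n.choose (N - j) : ℝ) * poch ((n : ℝ) / 2) j * poch lam j /
        (poch (lam - (n : ℝ) / 2 + 1) j * (j.factorial : ℝ))) :
    (lam - n + 2 * N) * ∑ j ∈ Finset.range (N + 1), (2 * N + 2 * j : ℝ) * a j =
      -(2 * N) * ((n : ℝ) - 2 * N) * ∑ j ∈ Finset.range (N + 1), a j := by
  -- nonvanishing of the Pochhammer denominators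
  have hpoch : ∀ j, j ≤ N → poch (lam - (n:ℝ)/2 + 1) j ≠ 0 := by
    intro j
    induction j with
    | zero => intro _; simp [poch]
    | succ m ih =>
      intro hm
      rw [poch_succ]
      refine mul_ne_zero (ih (by omega)) ?_
      have := hlam (m+1) (by omega) hm
      push_cast at this ⊢
      convert this using 1
      ring
  -- the telescoping function
  set g : ℕ → ℝ := fun j => (j:ℝ) * ((j:ℝ) + (n:ℝ) - (N:ℝ)) * (2*lam - (n:ℝ) + 2*j) * a j
    with hg
  -- telescoping step
  have hstep : ∀ j, j < N →
      g (j+1) = g j - (n:ℝ) * ((j:ℝ)*(lam - (n:ℝ) + 2*N) + (N:ℝ)*lam) * a j := by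
    intro j hj
    obtain ⟨k, hk⟩ : ∃ k, N = j + k + 1 := ⟨N - j - 1, by omega⟩
    have hNj : N - j = k + 1 := by omega
    have hNj1 : N - (j+1) = k := by omega
    have hd : lam - (n:ℝ)/2 + 1 + (j:ℝ) ≠ 0 := by
      have := hlam (j+1) (by omega) (by omega)
      push_cast at this ⊢
      convert this using 1; ring
    have hDj : poch (lam - (n:ℝ)/2 + 1) j ≠ 0 := hpoch j (by omega)
    have hF : (j.factorial : ℝ) ≠ 0 := by exact_mod_cast j.factorial_ne_zero
    -- product form of ha
    have haj : a j * (poch (lam - (n:ℝ)/2 + 1) j * (j.factorial : ℝ))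
        = (-1)^j * (n.choose (k+1) : ℝ) * poch ((n:ℝ)/2) j * poch lam j := by
      rw [ha j (by omega), hNj, div_mul_cancel₀ _ (mul_ne_zero hDj hF)]
    have haj1 : a (j+1) * ((poch (lam - (n:ℝ)/2 + 1) j * (lam - (n:ℝ)/2 + 1 + j))
          * (((j:ℝ)+1) * (j.factorial : ℝ)))
        = -((-1)^j) * (n.choose k : ℝ) * (poch ((n:ℝ)/2) j * ((n:ℝ)/2 + j))
          * (poch lam j * (lam + j)) := by
      have hden : poch (lam - (n:ℝ)/2 + 1) (j+1) * ((j+1).factorial : ℝ)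
          = poch (lam - (n:ℝ)/2 + 1) j * (lam - (n:ℝ)/2 + 1 + (j:ℝ))
            * (((j:ℝ)+1) * (j.factorial : ℝ)) := by
        rw [poch_succ, Nat.factorial_succ]; push_cast; ring
      have hden0 : poch (lam - (n:ℝ)/2 + 1) j * (lam - (n:ℝ)/2 + 1 + (j:ℝ))
            * (((j:ℝ)+1) * (j.factorial : ℝ)) ≠ 0 := by
        refine mul_ne_zero (mul_ne_zero hDj hd) (mul_ne_zero (by positivity) hF)
      rw [ha (j+1) (by omega), hNj1, hden, div_mul_cancel₀ _ hden0, poch_succ, poch_succ,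
        pow_succ]
      push_cast
      ring
    have hch := choose_real n k
    -- the contiguous recurrence, cleared of denominators
    have hE0 : (((n:ℝ) - k) * (lam - (n:ℝ)/2 + 1 + j) * ((j:ℝ)+1) * a (j+1)
          + ((k:ℝ)+1) * ((n:ℝ)/2 + j) * (lam + j) * a j)
          * (poch (lam - (n:ℝ)/2 + 1) j * (j.factorial : ℝ)) = 0 := by
      linear_combination ((n:ℝ) - k) * haj1
        + ((k:ℝ)+1) * ((n:ℝ)/2 + j) * (lam + j) * haj
        - (-1)^j * poch ((n:ℝ)/2) j * poch lam j * ((n:ℝ)/2 + j) * (lam + j) * hch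
    have hE : ((n:ℝ) - k) * (lam - (n:ℝ)/2 + 1 + j) * ((j:ℝ)+1) * a (j+1)
          + ((k:ℝ)+1) * ((n:ℝ)/2 + j) * (lam + j) * a j = 0 := by
      rcases mul_eq_zero.mp hE0 with h | h
      · exact h
      · exact absurd h (mul_ne_zero hDj hF)
    -- cast of N
    have hNcast : (N:ℝ) = (j:ℝ) + (k:ℝ) + 1 := by exact_mod_cast congrArg (Nat.cast (R := ℝ)) hk
    have key : (lam - (n:ℝ)/2 + 1 + j) *
        (g (j+1) - (g j - (n:ℝ) * ((j:ℝ)*(lam - (n:ℝ) + 2*N) + (N:ℝ)*lam) * a j))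
        = (2*lam - (n:ℝ) + 2*((j:ℝ)+1)) *
          (((n:ℝ) - k) * (lam - (n:ℝ)/2 + 1 + j) * ((j:ℝ)+1) * a (j+1)
            + ((k:ℝ)+1) * ((n:ℝ)/2 + j) * (lam + j) * a j) := by
      simp only [hg]
      push_cast [hNcast]
      ring
    rw [hE, mul_zero] at key
    have := mul_eq_zero.mp key
    rcases this with h | h
    · exact absurd h hd
    · linarith
  -- sum of the certificate relation
  have hsum : ∑ j ∈ Finset.range (N+1),
      (n:ℝ) * ((j:ℝ)*(lam - (n:ℝ) + 2*N) + (N:ℝ)*lam) * a j = 0 := by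
    rw [Finset.sum_range_succ]
    have htel : ∑ j ∈ Finset.range N,
        (n:ℝ) * ((j:ℝ)*(lam - (n:ℝ) + 2*N) + (N:ℝ)*lam) * a j = g 0 - g N := by
      rw [← Finset.sum_range_sub' g N]
      apply Finset.sum_congr rfl
      intro j hj
      have := hstep j (Finset.mem_range.mp hj)
      linarith
    rw [htel]
    have hg0 : g 0 = 0 := by simp [hg]
    have hgN : g N = (n:ℝ) * ((N:ℝ)*(lam - (n:ℝ) + 2*N) + (N:ℝ)*lam) * a N := by
      simp only [hg]; ring
    rw [hg0, hgN]; ring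
  -- conclude
  have h2 : ∑ j ∈ Finset.range (N+1),
      (n:ℝ) * ((j:ℝ)*(lam - (n:ℝ) + 2*N) + (N:ℝ)*lam) * a j
      = (n:ℝ)/2 * ((lam - (n:ℝ) + 2*N) * ∑ j ∈ Finset.range (N+1), (2*N + 2*j : ℝ) * a j
        + (2*(N:ℝ)) * ((n:ℝ) - 2*N) * ∑ j ∈ Finset.range (N+1), a j) := by
    rw [Finset.mul_sum, Finset.mul_sum, mul_add, Finset.mul_sum, Finset.mul_sum,
      ← Finset.sum_add_distrib]
    apply Finset.sum_congr rfl
    intro j _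
    ring
  rw [hsum] at h2
  have hhalf : (n:ℝ)/2 ≠ 0 := by positivity
  have hz : (lam - (n:ℝ) + 2*N) * ∑ j ∈ Finset.range (N+1), (2*N + 2*j : ℝ) * a j
      + (2*(N:ℝ)) * ((n:ℝ) - 2*N) * ∑ j ∈ Finset.range (N+1), a j = 0 := by
    rcases mul_eq_zero.mp h2.symm with h | h
    · exact absurd h hhalf
    · exact h
  linarith
end

section
/- Let n = 2m with m ≥ 1 an integer, and let λ be a real number such that λ − m + k ≠ 0 for every integer k with 1 ≤ k ≤ m. Then ∑_{j=0}^{m} (2m + 2j) · (−1)^j · C(2m, m−j) · (m)_j (λ)_j / ((λ − m + 1)_j · j!) = 0. (This is Theorem 2.3, the vanishing V_n(λ) = 0 of the critical polynomial, verified on the round sphere S^n of even dimension n = 2m, where T*_{2j}(λ)(v_{n−2j}) equals (−1)^m 2^{−2m} times the j-th summand.) -/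
lemma poch_succ_left (x : ℝ) (k : ℕ) : poch x (k + 1) = x * poch (x + 1) k := by
  induction k with
  | zero => simp [poch]
  | succ n ih =>
    rw [show poch x (n+1+1) = poch x (n+1) * (x + (n+1)) from by rw [poch]; push_cast; ring,
      ih, poch]
    ring

lemma lemA (m : ℕ) (hm : 1 ≤ m) : ∀ j, j ≤ m →
    (2 * m + 2 * j : ℝ) * (-1) ^ j * ((2 * m).choose (m - j) : ℝ) * poch (m : ℝ) j
      = 2 * m * ((2 * m).choose m : ℝ) * poch (-(m : ℝ)) j := by
  intro j
  induction j with
  | zero => intro _; simp [poch]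
  | succ n ih =>
    intro h
    have hn : n < m := by omega
    have hnat : (2 * m).choose (m - n) * (m - n) = (2 * m).choose (m - (n + 1)) * (m + n + 1) := by
      have h0 := Nat.choose_succ_right_eq (2 * m) (m - n - 1)
      have h1 : m - n - 1 + 1 = m - n := by omega
      have h2 : 2 * m - (m - n - 1) = m + n + 1 := by omega
      have h3 : m - (n + 1) = m - n - 1 := by omega
      rw [h1, h2] at h0
      rw [h3]; exact h0
    have hc : ((2 * m).choose (m - n) : ℝ) * ((m : ℝ) - n)
        = ((2 * m).choose (m - (n + 1)) : ℝ) * ((m : ℝ) + n + 1) := by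
      have := congrArg (Nat.cast (R := ℝ)) hnat
      push_cast [Nat.cast_sub hn.le] at this
      linarith [this]
    simp only [poch]
    push_cast
    linear_combination ((n : ℝ) - m) * ih hn.le
      + 2 * ((m : ℝ) + n) * (-1) ^ n * poch (m : ℝ) n * hc

theorem statement5 (m : ℕ) (hm : 1 ≤ m) (lam : ℝ)
    (hlam : ∀ k : ℕ, 1 ≤ k → k ≤ m → lam - (m : ℝ) + k ≠ 0) :
    ∑ j ∈ Finset.range (m + 1),
        (2 * m + 2 * j : ℝ) * (-1) ^ j * ((2 * m).choose (m - j) : ℝ) *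
          poch (m : ℝ) j * poch lam j /
            (poch (lam - (m : ℝ) + 1) j * (j.factorial : ℝ)) = 0 := by
  -- nonvanishing of the denominator Pochhammer
  have hD : ∀ k, k ≤ m → poch (lam - (m : ℝ) + 1) k ≠ 0 := by
    intro k
    induction k with
    | zero => intro _; simp [poch]
    | succ n ih =>
      intro h
      rw [poch]
      refine mul_ne_zero (ih (by omega)) ?_
      have := hlam (n + 1) (by omega) h
      intro hz; apply this
      push_cast; linarith [hz]
  -- partial sums of the Chu–Vandermonde series
  have hB : ∀ k, k ≤ m →
      ∑ j ∈ Finset.range (k + 1),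
          poch (-(m : ℝ)) j * poch lam j / (poch (lam - (m : ℝ) + 1) j * (j.factorial : ℝ))
        = poch (1 - (m : ℝ)) k * poch (lam + 1) k
            / (poch (lam - (m : ℝ) + 1) k * (k.factorial : ℝ)) := by
    intro k
    induction k with
    | zero => intro _; simp [poch]
    | succ n ih =>
      intro h
      rw [Finset.sum_range_succ, ih (by omega)]
      have hDn : poch (lam - (m : ℝ) + 1) n ≠ 0 := hD n (by omega)
      have hDs : lam - (m : ℝ) + 1 + n ≠ 0 := by
        have := hlam (n + 1) (by omega) h
        intro hz; apply this; push_cast; linarith [hz]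
      have hfac : (n.factorial : ℝ) ≠ 0 := by positivity
      rw [show poch (-(m : ℝ)) (n + 1) = -(m : ℝ) * poch (1 - (m : ℝ)) n from by
            rw [poch_succ_left]; ring_nf,
          show poch lam (n + 1) = lam * poch (lam + 1) n from poch_succ_left lam n]
      simp only [show ∀ (x : ℝ) (k : ℕ), poch x (k + 1) = poch x k * (x + k) from
        fun x k => rfl, Nat.factorial_succ]
      push_cast
      field_simp
      ring
  have hzero : poch (1 - (m : ℝ)) m = 0 := by
    obtain ⟨n, rfl⟩ := Nat.exists_eq_add_of_le hm
    rw [show 1 + n = n + 1 from by omega, poch]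
    have : (1 : ℝ) - (↑(n + 1) : ℝ) + n = 0 := by push_cast; ring
    rw [this, mul_zero]
  have key : ∀ j ∈ Finset.range (m + 1),
      (2 * m + 2 * j : ℝ) * (-1) ^ j * ((2 * m).choose (m - j) : ℝ) *
          poch (m : ℝ) j * poch lam j /
            (poch (lam - (m : ℝ) + 1) j * (j.factorial : ℝ))
        = 2 * m * ((2 * m).choose m : ℝ) *
            (poch (-(m : ℝ)) j * poch lam j
              / (poch (lam - (m : ℝ) + 1) j * (j.factorial : ℝ))) := by
    intro j hj
    have hj' : j ≤ m := by simpa using Nat.lt_succ_iff.mp (Finset.mem_range.mp hj)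
    rw [show (2 * m + 2 * j : ℝ) * (-1) ^ j * ((2 * m).choose (m - j) : ℝ) *
          poch (m : ℝ) j * poch lam j
        = ((2 * m + 2 * j : ℝ) * (-1) ^ j * ((2 * m).choose (m - j) : ℝ) *
          poch (m : ℝ) j) * poch lam j from by ring,
      lemA m hm j hj']
    ring
  rw [Finset.sum_congr rfl key, ← Finset.mul_sum, hB m le_rfl, hzero]
  ring
end

section
/- Let n ≥ 1 and N ≥ 1 be integers. Then ∑_{j=0}^{N−1} (2N − 2j) · (−1)^j · C(n, N−j) · (n/2)_j (n/2 − N)_j / ((1 − N)_j · j!) = (4N / (N! · (N−1)!)) · (n/2)_N · (n/2 − N + 1)_{N−1}. (Note that (1 − N)_j ≠ 0 for 0 ≤ j ≤ N−1. This is the holographic formula for Q-curvature, Theorem 1.1, evaluated on the round sphere S^n, where Q_{2N}(S^n) = (n/2)_N (n/2 − N + 1)_{N−1}, T*_{2j}(n/2 − N)(1) = (n/2)_j (n/2 − N)_j / (2^{2j} j! (1 − N)_j), and v_{2k} = (−1)^k 2^{−2k} C(n,k).) -/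
lemma fac_ne (m : ℕ) : ((m.factorial : ℝ)) ≠ 0 := by
  exact_mod_cast m.factorial_ne_zero

lemma bin (n k : ℕ) : ((n.choose (k+1) : ℝ)) * (k+1) = (n.choose k : ℝ) * ((n : ℝ) - k) := by
  rcases le_or_gt k n with h | h
  · have h1 : (n.choose (k+1) * (k+1) : ℕ) = n.choose k * (n - k) := Nat.choose_succ_right_eq n k
    have h2 : ((n - k : ℕ) : ℝ) = (n : ℝ) - k := Nat.cast_sub h
    calc ((n.choose (k+1) : ℝ)) * (k+1) = ((n.choose (k+1) * (k+1) : ℕ) : ℝ) := by push_cast; ring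
      _ = ((n.choose k * (n - k) : ℕ) : ℝ) := by rw [h1]
      _ = (n.choose k : ℝ) * ((n : ℝ) - k) := by push_cast [h2]; ring
  · rw [Nat.choose_eq_zero_of_lt h, Nat.choose_eq_zero_of_lt (by omega)]
    simp

lemma poch_one_sub (N : ℕ) : ∀ j, j < N →
    poch (1 - (N : ℝ)) j = (-1) ^ j * ((N-1).factorial : ℝ) / (((N-1-j).factorial : ℝ)) := by
  intro j
  induction j with
  | zero => intro _; simp only [poch, pow_zero, one_mul, Nat.sub_zero]; rw [div_self (fac_ne _)]
  | succ j ih =>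
    intro hj
    have hjN : j < N := by omega
    have hb : N - 1 - j = (N - 1 - (j+1)) + 1 ∨ N - 1 - j = 0 := by omega
    simp only [poch]
    rw [ih hjN]
    rcases Nat.lt_or_ge (j+1) N with h | h
    · have hb1 : N - 1 - j = (N - 1 - (j+1)) + 1 := by omega
      have hcast : ((N - 1 - j : ℕ) : ℝ) = (N : ℝ) - 1 - j := by
        have : (N - 1 - j : ℕ) = N - (1 + j) := by omega
        rw [this]; push_cast [Nat.cast_sub (by omega : 1 + j ≤ N)]; ring
      rw [hb1, Nat.factorial_succ]
      have hcast2 : (((N - 1 - (j+1)) + 1 : ℕ) : ℝ) = (N:ℝ) - 1 - j := by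
        rw [← hb1]; exact hcast
      push_cast [hcast2]
      have hne1 : (N:ℝ) - 1 - j ≠ 0 := by
        have : (1:ℝ) ≤ (N:ℝ) - 1 - j := by
          have : j + 2 ≤ N := by omega
          have := Nat.cast_le (α := ℝ).mpr this
          push_cast at this ⊢; linarith
        linarith
      field_simp
      ring
    · omega

noncomputable def Z (n N : ℕ) : ℕ → ℝ
  | 0 => 0
  | m + 1 => 2 * (m + 1) * ((m : ℝ) + 1 + n - N) * ((N - (m+1)).factorial : ℝ) *
      (n.choose (N - (m+1)) : ℝ) * poch ((n:ℝ)/2 + 1) m * poch ((n:ℝ)/2 - N + 1) m /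
      (((N-1).factorial : ℝ) * ((m+1).factorial : ℝ))

lemma key (n N : ℕ) (hN : 1 ≤ N) : ∀ j < N, Z n N (j+1) - Z n N j =
    2 * ((N-j).factorial : ℝ) * (n.choose (N-j) : ℝ) *
      poch ((n:ℝ)/2) j * poch ((n:ℝ)/2 - N) j /
      (((N-1).factorial : ℝ) * (j.factorial : ℝ)) := by
  intro j hj
  match j with
  | 0 =>
    have hb := bin n (N-1)
    rw [Nat.sub_add_cancel hN] at hb
    have hc : ((N - 1 : ℕ) : ℝ) = (N : ℝ) - 1 := by have := Nat.cast_sub (R:=ℝ) hN; simpa using this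
    rw [hc] at hb
    simp only [Z, poch, Nat.sub_zero, Nat.factorial_zero]
    have hfN : (N.factorial : ℝ) = N * ((N-1).factorial : ℝ) := by
      have : N.factorial = N * (N-1).factorial := by
        conv_lhs => rw [← Nat.sub_add_cancel hN]
        rw [Nat.factorial_succ, Nat.sub_add_cancel hN]
      exact_mod_cast this
    rw [hfN]
    push_cast
    field_simp
    linear_combination (-2 : ℝ) * hb
  | (k+1) =>
    have hk2 : k + 2 ≤ N := hj
    have h2 : N - (k+1+1) = N - (k+2) := by omega
    have h1 : N - (k+1) = (N - (k+2)) + 1 := by omega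
    have hca : ((N - (k+2) : ℕ) : ℝ) = (N:ℝ) - k - 2 := by
      have := Nat.cast_sub (R:=ℝ) hk2; push_cast at this ⊢; linarith
    have ha1 : (((N - (k+2)) + 1 : ℕ) : ℝ) = (N:ℝ) - k - 1 := by push_cast [hca]; ring
    have hb' : (n.choose ((N-(k+2))+1) : ℝ)
        = (n.choose (N-(k+2)) : ℝ) * ((n:ℝ) - (N - (k+2) : ℕ)) / ((N-(k+2) : ℕ) + 1) := by
      rw [eq_div_iff (by positivity)]
      exact bin n (N-(k+2))
    rw [poch_succ_left ((n:ℝ)/2) k, poch_succ_left ((n:ℝ)/2 - N) k]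
    simp only [Z, h1, h2, poch]
    rw [hb', Nat.factorial_succ ((N-(k+2))), Nat.factorial_succ (k+1)]
    rw [hca]
    push_cast [hca]
    have hx1 : ((N:ℝ) - k - 2) + 1 ≠ 0 := by
      have : ((k:ℝ)+2) ≤ (N:ℝ) := by exact_mod_cast Nat.cast_le.mpr hk2
      intro h; nlinarith
    field_simp
    ring

lemma term_eq (n N : ℕ) (hN : 1 ≤ N) : ∀ j < N,
    (2 * N - 2 * j : ℝ) * (-1) ^ j * (n.choose (N - j) : ℝ) *
        poch ((n : ℝ) / 2) j * poch ((n : ℝ) / 2 - N) j /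
          (poch (1 - (N : ℝ)) j * (j.factorial : ℝ)) =
    2 * ((N-j).factorial : ℝ) * (n.choose (N-j) : ℝ) *
      poch ((n:ℝ)/2) j * poch ((n:ℝ)/2 - N) j /
      (((N-1).factorial : ℝ) * (j.factorial : ℝ)) := by
  intro j hj
  rw [poch_one_sub N j hj, show N - j = (N-1-j)+1 from by omega, Nat.factorial_succ]
  have hc1 : (((N-1-j) : ℕ) : ℝ) = (N:ℝ) - 1 - j := by
    have : N - 1 - j = N - (1 + j) := by omega
    rw [this]
    have := Nat.cast_sub (R:=ℝ) (show 1 + j ≤ N by omega)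
    push_cast at this ⊢; linarith
  have hd : ((-1:ℝ))^j ≠ 0 := pow_ne_zero _ (by norm_num)
  have hsq : ((-1:ℝ))^j * (-1)^j = 1 := by
    rw [← pow_add, ← two_mul, pow_mul]; norm_num
  push_cast [hc1]
  field_simp
  ring_nf

theorem statement7 (n N : ℕ) (hn : 1 ≤ n) (hN : 1 ≤ N) :
    ∑ j ∈ Finset.range N,
        (2 * N - 2 * j : ℝ) * (-1) ^ j * (n.choose (N - j) : ℝ) *
          poch ((n : ℝ) / 2) j * poch ((n : ℝ) / 2 - N) j /
            (poch (1 - (N : ℝ)) j * (j.factorial : ℝ)) =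
      4 * (N : ℝ) / ((N.factorial : ℝ) * ((N - 1).factorial : ℝ)) *
        poch ((n : ℝ) / 2) N * poch ((n : ℝ) / 2 - N + 1) (N - 1) := by
  obtain ⟨M, rfl⟩ : ∃ M, N = M + 1 := ⟨N - 1, by omega⟩
  have hsum : ∀ j ∈ Finset.range (M+1),
      (2 * ((M+1:ℕ):ℝ) - 2 * j : ℝ) * (-1) ^ j * (n.choose ((M+1) - j) : ℝ) *
        poch ((n : ℝ) / 2) j * poch ((n : ℝ) / 2 - ((M+1:ℕ):ℝ)) j /
          (poch (1 - ((M+1:ℕ) : ℝ)) j * (j.factorial : ℝ))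
      = Z n (M+1) (j+1) - Z n (M+1) j := by
    intro j hj
    rw [term_eq n (M+1) hN j (Finset.mem_range.mp hj),
      key n (M+1) hN j (Finset.mem_range.mp hj)]
  rw [Finset.sum_congr rfl hsum, Finset.sum_range_sub]
  simp only [Z, Nat.add_sub_cancel, Nat.sub_self, Nat.choose_zero_right,
    Nat.factorial_zero, poch_succ_left ((n:ℝ)/2) M]
  push_cast
  field_simp
  ring
end
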